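/- Let K ≥ 1, P > 0, h_k > 0 and θ_k ≥ 0 for k = 1,...,K. For every power vector p ∈ ℝ^K with p_k ≥ 0 and Σ_{k=1}^K p_k ≤ P, writing P_k = Σ_{j=1}^k p_j (with P_0 = 0), we have Σ_{k=1}^K θ_k · log((1 + h_k P_k)/(1 + h_k P_{k−1})) ≤ ∫_0^P max_{1 ≤ k ≤ K} θ_k/(1/h_k + z) dz. -/

import Mathlib

/-- Upper bound for the weighted sum rate: for any feasible power split,
`∑_k θ_k log((1 + h_k P_k)/(1 + h_k P_{k-1})) ≤ ∫_0^P max_k θ_k/(1/h_k + z) dz`. -/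
theorem stmt5 (K : ℕ) (hK : 1 ≤ K) (P : ℝ) (hP : 0 < P)
    (h θ : Fin K → ℝ) (hh : ∀ k, 0 < h k) (hθ : ∀ k, 0 ≤ θ k)
    (p : Fin K → ℝ) (hp : ∀ k, 0 ≤ p k) (hsum : ∑ k, p k ≤ P) :
    ∑ k, θ k *
        Real.log ((1 + h k * ∑ j ∈ Finset.univ.filter (· ≤ k), p j) /
          (1 + h k * ∑ j ∈ Finset.univ.filter (· < k), p j))
      ≤ ∫ z in (0 : ℝ)..P,
          Finset.univ.sup' (Finset.univ_nonempty_iff.mpr ⟨⟨0, hK⟩⟩)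
            (fun k => θ k / (1 / h k + z)) := by
  have ne : (Finset.univ : Finset (Fin K)).Nonempty := Finset.univ_nonempty_iff.mpr ⟨⟨0, hK⟩⟩
  set f : ℝ → ℝ := fun z => Finset.univ.sup' ne (fun k => θ k / (1 / h k + z)) with hfdef
  set a : ℕ → ℝ := fun n => ∑ j ∈ Finset.univ.filter (fun j : Fin K => (j : ℕ) < n), p j
    with hadef
  have ha0 : a 0 = 0 := by simp [hadef]
  have hmono : Monotone a := by
    intro m n hmn
    apply Finset.sum_le_sum_of_subset_of_nonneg
    · intro j hj
      simp only [Finset.mem_filter, Finset.mem_univ, true_and] at hj ⊢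
      exact lt_of_lt_of_le hj hmn
    · exact fun j _ _ => hp j
  have hanonneg : ∀ n, 0 ≤ a n := fun n => ha0 ▸ hmono (Nat.zero_le n)
  have haK : a K ≤ P := by
    have : a K = ∑ k, p k := by
      apply Finset.sum_congr _ (fun _ _ => rfl)
      simp [Finset.filter_true_of_mem, Fin.is_lt]
    linarith
  have hUIcc : ∀ b c : ℝ, 0 ≤ b → 0 ≤ c → Set.uIcc b c ⊆ Set.Ici 0 := by
    intro b c hb hc z hz
    rcases Set.mem_uIcc.mp hz with ⟨h1, _⟩ | ⟨h1, _⟩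
    · exact le_trans hb h1
    · exact le_trans hc h1
  have hgcont : ∀ k : Fin K, ContinuousOn (fun z => θ k / (1 / h k + z)) (Set.Ici 0) := by
    intro k
    apply ContinuousOn.div continuousOn_const (continuousOn_const.add continuousOn_id)
    intro z hz
    exact ne_of_gt (add_pos_of_pos_of_nonneg (one_div_pos.mpr (hh k)) hz)
  have hfcont : ContinuousOn f (Set.Ici 0) :=
    ContinuousOn.finset_sup'_apply ne (fun k _ => hgcont k)
  have hfint : ∀ b c : ℝ, 0 ≤ b → 0 ≤ c → IntervalIntegrable f MeasureTheory.volume b c := by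
    intro b c hb hc
    exact (hfcont.mono (hUIcc b c hb hc)).intervalIntegrable
  have hgint : ∀ (k : Fin K) (b c : ℝ), 0 ≤ b → 0 ≤ c →
      IntervalIntegrable (fun z => θ k / (1 / h k + z)) MeasureTheory.volume b c := by
    intro k b c hb hc
    exact ((hgcont k).mono (hUIcc b c hb hc)).intervalIntegrable
  have hfnonneg : ∀ z : ℝ, 0 ≤ z → 0 ≤ f z := by
    intro z hz
    refine le_trans ?_ (Finset.le_sup' (fun k => θ k / (1 / h k + z)) (Finset.mem_univ ⟨0, hK⟩))
    exact div_nonneg (hθ _)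
      (add_pos_of_pos_of_nonneg (one_div_pos.mpr (hh _)) hz).le
  -- key: each term equals an integral
  have hterm : ∀ k : Fin K,
      θ k * Real.log ((1 + h k * a ((k : ℕ) + 1)) / (1 + h k * a (k : ℕ)))
        = ∫ z in a (k : ℕ)..a ((k : ℕ) + 1), θ k / (1 / h k + z) := by
    intro k
    set C := 1 / h k with hC
    have hk0 : h k ≠ 0 := ne_of_gt (hh k)
    have hCpos : 0 < C := one_div_pos.mpr (hh k)
    have hc := hanonneg (k : ℕ)
    have hderiv : ∀ z ∈ Set.uIcc (a (k : ℕ)) (a ((k : ℕ) + 1)),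
        HasDerivAt (fun z => θ k * Real.log (C + z)) (θ k / (C + z)) z := by
      intro z hz
      have hz0 : 0 ≤ z := hUIcc _ _ hc (hanonneg _) hz
      have hCz : 0 < C + z := add_pos_of_pos_of_nonneg hCpos hz0
      have h1 : HasDerivAt (fun z : ℝ => C + z) 1 z := (hasDerivAt_id z).const_add C
      have h2 : HasDerivAt (fun z : ℝ => Real.log (C + z)) (1 / (C + z)) z :=
        h1.log (ne_of_gt hCz)
      have h3 := h2.const_mul (θ k)
      simpa [mul_one_div, div_eq_mul_inv] using h3
    rw [intervalIntegral.integral_eq_sub_of_hasDerivAt hderiv (hgint k _ _ hc (hanonneg _))]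
    have hCc : 0 < C + a (k : ℕ) := add_pos_of_pos_of_nonneg hCpos hc
    have hCb : 0 < C + a ((k : ℕ) + 1) := add_pos_of_pos_of_nonneg hCpos (hanonneg _)
    have e1 : 1 + h k * a ((k : ℕ) + 1) = h k * (C + a ((k : ℕ) + 1)) := by
      rw [hC]; field_simp
    have e2 : 1 + h k * a (k : ℕ) = h k * (C + a (k : ℕ)) := by
      rw [hC]; field_simp
    rw [e1, e2, mul_div_mul_left _ _ hk0, Real.log_div (ne_of_gt hCb) (ne_of_gt hCc)]
    ring
  have hfilt1 : ∀ k : Fin K,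
      ∑ j ∈ Finset.univ.filter (· ≤ k), p j = a ((k : ℕ) + 1) := by
    intro k
    apply Finset.sum_congr _ (fun _ _ => rfl)
    congr 1
    ext j
    exact ⟨fun hj => Nat.lt_succ_of_le (Fin.le_def.mp hj), fun hj => Fin.le_def.mpr (Nat.lt_succ_iff.mp hj)⟩
  have hfilt2 : ∀ k : Fin K,
      ∑ j ∈ Finset.univ.filter (· < k), p j = a (k : ℕ) := by
    intro k
    apply Finset.sum_congr _ (fun _ _ => rfl)
    congr 1

  calc ∑ k, θ k *
        Real.log ((1 + h k * ∑ j ∈ Finset.univ.filter (· ≤ k), p j) /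
          (1 + h k * ∑ j ∈ Finset.univ.filter (· < k), p j))
      = ∑ k : Fin K, ∫ z in a (k : ℕ)..a ((k : ℕ) + 1), θ k / (1 / h k + z) := by
        refine Finset.sum_congr rfl (fun k _ => ?_)
        rw [hfilt1 k, hfilt2 k, hterm k]
    _ ≤ ∑ k : Fin K, ∫ z in a (k : ℕ)..a ((k : ℕ) + 1), f z := by
        refine Finset.sum_le_sum (fun k _ => ?_)
        apply intervalIntegral.integral_mono_on (hmono (Nat.le_succ _))
          (hgint k _ _ (hanonneg _) (hanonneg _)) (hfint _ _ (hanonneg _) (hanonneg _))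
        intro z hz
        exact Finset.le_sup' (fun k => θ k / (1 / h k + z)) (Finset.mem_univ k)
    _ = ∑ i ∈ Finset.range K, ∫ z in (a i)..(a (i + 1)), f z :=
        Fin.sum_univ_eq_sum_range (fun i => ∫ z in (a i)..(a (i + 1)), f z) K
    _ = ∫ z in (a 0)..(a K), f z :=
        intervalIntegral.sum_integral_adjacent_intervals
          (fun i _ => hfint _ _ (hanonneg _) (hanonneg _))
    _ = ∫ z in (0 : ℝ)..a K, f z := by rw [ha0]
    _ ≤ ∫ z in (0 : ℝ)..P, f z := by
        have hadd := intervalIntegral.integral_add_adjacent_intervals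
          (hfint 0 (a K) le_rfl (hanonneg K)) (hfint (a K) P (hanonneg K) hP.le)
        have hnn : 0 ≤ ∫ z in a K..P, f z := by
          apply intervalIntegral.integral_nonneg haK
          intro z hz
          exact hfnonneg z (le_trans (hanonneg K) hz.1)
        linarith
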